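/- arXiv:2412.03918 — 2 statements merged into one kernel-verified Lean document; each statement's English description precedes it below -/
import Mathlib

section
/- Let n, q be positive integers, X a real n×q matrix, W a real n×n symmetric positive definite matrix with XᵀWX invertible, φ > 0 a real number, z ∈ ℝⁿ, and x ∈ ℝⁿ, and set P := W^{1/2}·X·(XᵀWX)⁻¹·Xᵀ·W^{1/2}. Assume s := (I − P)·W^{1/2}·x ≠ 0. Define β̂ := (XᵀWX)⁻¹·Xᵀ·W·z, r := (I − P)·W^{1/2}·(z − X·β̂), and let u ∈ ℝ^{q+1} be the vector whose first q coordinates are (1/φ)·Xᵀ·W·(z − X·β̂) and whose last coordinate is (1/φ)·xᵀ·W·(z − X·β̂), and let M be the block matrix [[XᵀWX, XᵀWx], [xᵀWX, xᵀWx]]. Then (1/φ)·M is invertible and the score statistic uᵀ·((1/φ)·M)⁻¹·u equals ⟨r, s⟩² / (φ·‖s‖²). -/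
open Matrix

/-- Closed form of the score statistic (Theorem 1 of the paper): with
`β̂ = (XᵀWX)⁻¹XᵀWz`, `r = (I − P)W^{1/2}(z − Xβ̂)`, `s = (I − P)W^{1/2}x ≠ 0`,
score vector `u = (1/φ)·(XᵀW(z − Xβ̂), xᵀW(z − Xβ̂))` and Fisher information `(1/φ)M`,
the matrix `(1/φ)M` is invertible and `uᵀ((1/φ)M)⁻¹u = ⟨r,s⟩²/(φ‖s‖²)`. -/
theorem stmt4 {n q : ℕ} (hn : 0 < n) (hq : 0 < q)
    (X : Matrix (Fin n) (Fin q) ℝ) (W : Matrix (Fin n) (Fin n) ℝ)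
    (hW : W.PosDef) (hXWX : IsUnit (Xᵀ * W * X).det)
    (φ : ℝ) (hφ : 0 < φ) (z x : Fin n → ℝ) :
    let Whalf := hW.posSemidef.1.eigenvectorUnitary.1 *
      diagonal ((↑) ∘ (Real.sqrt ∘ hW.posSemidef.1.eigenvalues)) *
      (star hW.posSemidef.1.eigenvectorUnitary : Matrix (Fin n) (Fin n) ℝ)
    let P := Whalf * X * (Xᵀ * W * X)⁻¹ * Xᵀ * Whalf
    let s : Fin n → ℝ := (1 - P) *ᵥ (Whalf *ᵥ x)
    s ≠ 0 →
    let βhat : Fin q → ℝ := (Xᵀ * W * X)⁻¹ *ᵥ (Xᵀ *ᵥ (W *ᵥ z))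
    let r : Fin n → ℝ := (1 - P) *ᵥ (Whalf *ᵥ (z - X *ᵥ βhat))
    let u : (Fin q ⊕ Unit) → ℝ :=
      Sum.elim (fun i => (1 / φ) * ((Xᵀ *ᵥ (W *ᵥ (z - X *ᵥ βhat))) i))
        (fun _ => (1 / φ) * (x ⬝ᵥ (W *ᵥ (z - X *ᵥ βhat))))
    let M : Matrix (Fin q ⊕ Unit) (Fin q ⊕ Unit) ℝ :=
      Matrix.fromBlocks (Xᵀ * W * X) (fun i _ => (Xᵀ *ᵥ (W *ᵥ x)) i)
        (fun _ j => Matrix.vecMul x (W * X) j) (fun _ _ => x ⬝ᵥ (W *ᵥ x))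
    IsUnit ((1 / φ) • M).det ∧
      u ⬝ᵥ (((1 / φ) • M)⁻¹ *ᵥ u) = (r ⬝ᵥ s) ^ 2 / (φ * (s ⬝ᵥ s)) := by
  intro Whalf P s hs βhat r u M
  have hWh2 : Whalf * Whalf = W := by
    have hU : (star hW.posSemidef.1.eigenvectorUnitary : Matrix (Fin n) (Fin n) ℝ) *
        hW.posSemidef.1.eigenvectorUnitary.1 = 1 := Unitary.star_mul_self_of_mem (SetLike.coe_mem _)
    have hD : diagonal ((↑) ∘ (Real.sqrt ∘ hW.posSemidef.1.eigenvalues)) *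
        diagonal ((↑) ∘ (Real.sqrt ∘ hW.posSemidef.1.eigenvalues)) =
        diagonal ((↑) ∘ hW.posSemidef.1.eigenvalues : Fin n → ℝ) := by
      rw [diagonal_mul_diagonal]
      congr 1
      funext i
      simp [Real.mul_self_sqrt (hW.posSemidef.eigenvalues_nonneg i)]
    calc Whalf * Whalf = hW.posSemidef.1.eigenvectorUnitary.1 *
        (diagonal ((↑) ∘ (Real.sqrt ∘ hW.posSemidef.1.eigenvalues)) *
        ((star hW.posSemidef.1.eigenvectorUnitary : Matrix (Fin n) (Fin n) ℝ) *
        hW.posSemidef.1.eigenvectorUnitary.1) *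
        diagonal ((↑) ∘ (Real.sqrt ∘ hW.posSemidef.1.eigenvalues))) *
        (star hW.posSemidef.1.eigenvectorUnitary : Matrix (Fin n) (Fin n) ℝ) := by
          simp only [Whalf, Matrix.mul_assoc]
      _ = W := by
          rw [hU, Matrix.mul_one, hD]
          exact (hW.posSemidef.1.spectral_theorem).symm
  have hWhsym : Whalfᵀ = Whalf := by
    simp only [Whalf, Matrix.transpose_mul, diagonal_transpose, Matrix.mul_assoc]
    rw [← conjTranspose_eq_transpose_of_trivial, ← conjTranspose_eq_transpose_of_trivial]
    simp [Matrix.star_eq_conjTranspose]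
  have hPdef : P = Whalf * X * (Xᵀ * W * X)⁻¹ * Xᵀ * Whalf := rfl
  have hsdef : s = (1 - P) *ᵥ (Whalf *ᵥ x) := rfl
  have hbdef : βhat = (Xᵀ * W * X)⁻¹ *ᵥ (Xᵀ *ᵥ (W *ᵥ z)) := rfl
  have hrdef : r = (1 - P) *ᵥ (Whalf *ᵥ (z - X *ᵥ βhat)) := rfl
  have hudef : u = Sum.elim (fun i => (1 / φ) * ((Xᵀ *ᵥ (W *ᵥ (z - X *ᵥ βhat))) i))
      (fun _ => (1 / φ) * (x ⬝ᵥ (W *ᵥ (z - X *ᵥ βhat)))) := rfl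
  have hMdef : M = Matrix.fromBlocks (Xᵀ * W * X) (fun i _ => (Xᵀ *ᵥ (W *ᵥ x)) i)
      (fun _ j => Matrix.vecMul x (W * X) j) (fun _ _ => x ⬝ᵥ (W *ᵥ x)) := rfl
  clear_value M u r βhat s P Whalf
  set A : Matrix (Fin q) (Fin q) ℝ := Xᵀ * W * X with hA
  have hWsym : Wᵀ = W := by
    have h := hW.isHermitian
    rwa [Matrix.IsHermitian, conjTranspose_eq_transpose_of_trivial] at h
  have hAsym : Aᵀ = A := by
    rw [hA]
    simp only [Matrix.transpose_mul, Matrix.transpose_transpose, hWsym, Matrix.mul_assoc]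
  have hAinvsym : (A⁻¹)ᵀ = A⁻¹ := by rw [Matrix.transpose_nonsing_inv, hAsym]
  have hAAi : A * A⁻¹ = 1 := mul_nonsing_inv A hXWX
  have hAiA : A⁻¹ * A = 1 := nonsing_inv_mul A hXWX
  set K : Matrix (Fin n) (Fin n) ℝ := (1 - P) * Whalf with hK
  have hPP : P * P = P := by
    rw [hPdef]
    calc Whalf * X * A⁻¹ * Xᵀ * Whalf * (Whalf * X * A⁻¹ * Xᵀ * Whalf)
        = Whalf * X * (A⁻¹ * ((Xᵀ * (Whalf * Whalf) * X) * A⁻¹)) * Xᵀ * Whalf := by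
          simp only [Matrix.mul_assoc]
      _ = Whalf * X * A⁻¹ * Xᵀ * Whalf := by
          rw [hWh2, ← hA, hAAi, Matrix.mul_one]
  have hQ : Kᵀ * K = W - W * X * A⁻¹ * (Xᵀ * W) := by
    have hPsym : Pᵀ = P := by
      rw [hPdef]
      simp only [Matrix.transpose_mul, Matrix.transpose_transpose, hWhsym, hAinvsym]
      simp only [Matrix.mul_assoc]
    have h1 : Kᵀ * K = Whalf * (1 - P) * Whalf := by
      rw [hK, Matrix.transpose_mul, Matrix.transpose_sub, Matrix.transpose_one, hPsym, hWhsym]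
      have h2 : (1 - P) * ((1 - P) * Whalf) = (1 - P) * Whalf := by
        rw [← Matrix.mul_assoc]
        congr 1
        rw [Matrix.sub_mul, Matrix.mul_sub, Matrix.mul_sub, hPP]
        simp
      rw [Matrix.mul_assoc Whalf, h2, Matrix.mul_assoc]
    rw [h1, Matrix.mul_sub, Matrix.sub_mul, Matrix.mul_one, hWh2, hPdef]
    congr 1
    calc Whalf * (Whalf * X * A⁻¹ * Xᵀ * Whalf) * Whalf
        = (Whalf * Whalf) * (X * (A⁻¹ * (Xᵀ * (Whalf * Whalf)))) := by
          simp only [Matrix.mul_assoc]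
      _ = W * X * A⁻¹ * (Xᵀ * W) := by rw [hWh2]; simp only [Matrix.mul_assoc]
  have hKdot : ∀ a b : Fin n → ℝ, (K *ᵥ a) ⬝ᵥ (K *ᵥ b)
      = ((W - W * X * A⁻¹ * (Xᵀ * W)) *ᵥ a) ⬝ᵥ b := by
    intro a b
    rw [dotProduct_mulVec, ← Matrix.mulVec_transpose, Matrix.mulVec_mulVec, hQ]
  set e : Fin n → ℝ := z - X *ᵥ βhat with he
  have hsK : s = K *ᵥ x := by rw [hsdef, hK, Matrix.mulVec_mulVec]
  have hrK : r = K *ᵥ e := by rw [hrdef, hK, Matrix.mulVec_mulVec, he]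
  have hkey : ∀ v : Fin q → ℝ, A *ᵥ (A⁻¹ *ᵥ v) = v := by
    intro v
    rw [Matrix.mulVec_mulVec, hAAi, Matrix.one_mulVec]
  have hXe : Xᵀ *ᵥ (W *ᵥ e) = 0 := by
    have h1 : Xᵀ *ᵥ (W *ᵥ (X *ᵥ βhat)) = Xᵀ *ᵥ (W *ᵥ z) := by
      rw [hbdef]
      calc Xᵀ *ᵥ (W *ᵥ (X *ᵥ (A⁻¹ *ᵥ (Xᵀ *ᵥ (W *ᵥ z)))))
          = (Xᵀ * W * X) *ᵥ (A⁻¹ *ᵥ (Xᵀ *ᵥ (W *ᵥ z))) := by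
            rw [Matrix.mulVec_mulVec, Matrix.mulVec_mulVec]
        _ = Xᵀ *ᵥ (W *ᵥ z) := by rw [← hA, hkey]
    rw [he, Matrix.mulVec_sub, Matrix.mulVec_sub, h1, sub_self]
  have hre : x ⬝ᵥ (W *ᵥ e) = r ⬝ᵥ s := by
    rw [hrK, hsK, hKdot e x, Matrix.sub_mulVec, sub_dotProduct]
    have h0 : (W * X * A⁻¹ * (Xᵀ * W)) *ᵥ e = 0 := by
      have hXWe : (Xᵀ * W) *ᵥ e = 0 := by rw [← Matrix.mulVec_mulVec, hXe]
      rw [← Matrix.mulVec_mulVec, hXWe, Matrix.mulVec_zero]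
    rw [h0, zero_dotProduct, sub_zero, dotProduct_comm]
  have hschur : x ⬝ᵥ (W *ᵥ x)
      - (x ᵥ* (W * X)) ⬝ᵥ (A⁻¹ *ᵥ (Xᵀ *ᵥ (W *ᵥ x))) = s ⬝ᵥ s := by
    rw [hsK, hKdot x x, Matrix.sub_mulVec, sub_dotProduct]
    congr 1
    · rw [dotProduct_comm]
    · rw [dotProduct_mulVec (x ᵥ* (W * X)) A⁻¹, Matrix.vecMul_vecMul,
        show Xᵀ *ᵥ (W *ᵥ x) = (Xᵀ * W) *ᵥ x by rw [Matrix.mulVec_mulVec],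
        dotProduct_mulVec, Matrix.vecMul_vecMul, ← Matrix.mulVec_transpose]
      congr 1
      simp only [Matrix.transpose_mul, Matrix.transpose_transpose, hWsym, hAinvsym,
        Matrix.mul_assoc]
  have hss : s ⬝ᵥ s ≠ 0 := by
    rw [Ne, dotProduct_self_eq_zero]; exact hs
  have hrow : (fun (_ : Unit) j => Matrix.vecMul x (W * X) j)
      = Matrix.replicateRow Unit (x ᵥ* (W * X)) := rfl
  have hcol : (fun i (_ : Unit) => (Xᵀ *ᵥ (W *ᵥ x)) i)
      = Matrix.replicateCol Unit (Xᵀ *ᵥ (W *ᵥ x)) := rfl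
  have hCAB : ∀ i j : Unit, (Matrix.replicateRow Unit (x ᵥ* (W * X)) * A⁻¹ *
        Matrix.replicateCol Unit (Xᵀ *ᵥ (W *ᵥ x))) i j
      = (x ᵥ* (W * X)) ⬝ᵥ (A⁻¹ *ᵥ (Xᵀ *ᵥ (W *ᵥ x))) := by
    intro i j
    rw [← Matrix.replicateRow_vecMul, Matrix.replicateRow_mul_replicateCol_apply, ← dotProduct_mulVec]
  have hMdet : M.det = A.det * (s ⬝ᵥ s) := by
    have : Invertible A := A.invertibleOfIsUnitDet hXWX
    rw [hMdef]
    erw [Matrix.det_fromBlocks₁₁]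
    rw [Matrix.invOf_eq_nonsing_inv]
    congr 1
    rw [Matrix.det_unique]
    erw [Matrix.sub_apply]
    rw [hrow, hcol, hCAB]
    exact hschur
  have hNdet : IsUnit ((1 / φ) • M).det := by
    rw [Matrix.det_smul, hMdet]
    refine isUnit_iff_ne_zero.2 ?_
    have h1 : (1 / φ : ℝ) ≠ 0 := by positivity
    exact mul_ne_zero (pow_ne_zero _ h1) (mul_ne_zero hXWX.ne_zero hss)
  refine ⟨hNdet, ?_⟩
  set c : ℝ := r ⬝ᵥ s with hc
  set t : ℝ := s ⬝ᵥ s with ht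
  set w : (Fin q ⊕ Unit) → ℝ :=
    Sum.elim (fun i => (-(c / t)) * (A⁻¹ *ᵥ (Xᵀ *ᵥ (W *ᵥ x))) i) (fun _ => c / t) with hw
  clear_value c t w
  have hMw : ((1 / φ) • M) *ᵥ w = u := by
    rw [smul_mulVec]
    have hMw' : M *ᵥ w = Sum.elim (0 : Fin q → ℝ) (fun _ => c) := by
      rw [hMdef, hw]
      erw [Matrix.fromBlocks_mulVec]
      have h1 : (A *ᵥ (fun i => (-(c / t)) * (A⁻¹ *ᵥ (Xᵀ *ᵥ (W *ᵥ x))) i))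
          = fun i => (-(c / t)) * (Xᵀ *ᵥ (W *ᵥ x)) i := by
        rw [show (fun i => (-(c / t)) * (A⁻¹ *ᵥ (Xᵀ *ᵥ (W *ᵥ x))) i)
            = (-(c / t)) • (A⁻¹ *ᵥ (Xᵀ *ᵥ (W *ᵥ x))) from rfl,
          Matrix.mulVec_smul, Matrix.mulVec_mulVec, hAAi, Matrix.one_mulVec]
        rfl
      have h2 : ((fun (i : Fin q) (_ : Unit) => (Xᵀ *ᵥ (W *ᵥ x)) i) *ᵥ (fun _ => c / t))
          = fun i => (Xᵀ *ᵥ (W *ᵥ x)) i * (c / t) := by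
        funext i; simp [Matrix.mulVec, dotProduct]
      have h3 : ((fun (_ : Unit) j => Matrix.vecMul x (W * X) j) *ᵥ
            (fun i => (-(c / t)) * (A⁻¹ *ᵥ (Xᵀ *ᵥ (W *ᵥ x))) i))
          = fun _ => (-(c / t)) * ((x ᵥ* (W * X)) ⬝ᵥ (A⁻¹ *ᵥ (Xᵀ *ᵥ (W *ᵥ x)))) := by
        rw [hrow, Matrix.replicateRow_mulVec_eq_const]
        funext j
        simp only [Function.const_apply]
        rw [show (fun i => (-(c / t)) * (A⁻¹ *ᵥ (Xᵀ *ᵥ (W *ᵥ x))) i)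
            = (-(c / t)) • (A⁻¹ *ᵥ (Xᵀ *ᵥ (W *ᵥ x))) from rfl,
          dotProduct_smul, smul_eq_mul]
      have h4 : ((fun (_ _ : Unit) => x ⬝ᵥ (W *ᵥ x)) *ᵥ (fun _ => c / t))
          = fun _ => (x ⬝ᵥ (W *ᵥ x)) * (c / t) := by
        funext j; simp [Matrix.mulVec, dotProduct]
      have hdot : (x ᵥ* (W * X)) ⬝ᵥ (A⁻¹ *ᵥ (Xᵀ *ᵥ (W *ᵥ x))) = x ⬝ᵥ (W *ᵥ x) - t := by
        rw [← hschur]; ring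
      funext i
      cases i with
      | inl i =>
        simp only [Sum.elim_inl, Sum.elim_comp_inl, Sum.elim_comp_inr, Pi.add_apply,
          Pi.zero_apply, h1, h2]
        ring
      | inr j =>
        simp only [Sum.elim_inr, Sum.elim_comp_inl, Sum.elim_comp_inr, Pi.add_apply, h3, h4]
        rw [hdot]
        linear_combination div_mul_cancel₀ c hss
    rw [hMw', hudef]
    funext i
    cases i with
    | inl i =>
      simp only [Pi.smul_apply, Sum.elim_inl, hXe, Pi.zero_apply, smul_eq_mul, mul_zero]
    | inr j =>
      simp only [Pi.smul_apply, Sum.elim_inr, hre, smul_eq_mul]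
  have hinv : (((1 / φ) • M)⁻¹ *ᵥ u) = w := by
    rw [← hMw, Matrix.mulVec_mulVec, nonsing_inv_mul _ hNdet, Matrix.one_mulVec]
  rw [hinv, hudef, hw, sumElim_dotProduct_sumElim]
  have h1 : (fun i => (1 / φ) * ((Xᵀ *ᵥ (W *ᵥ e)) i)) ⬝ᵥ
      (fun i => (-(c / t)) * (A⁻¹ *ᵥ (Xᵀ *ᵥ (W *ᵥ x))) i) = 0 := by
    simp only [hXe, Pi.zero_apply, mul_zero]
    simp [dotProduct]
  have h2 : (fun (_ : Unit) => (1 / φ) * (x ⬝ᵥ (W *ᵥ e))) ⬝ᵥ (fun (_ : Unit) => c / t)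
      = (1 / φ) * c * (c / t) := by
    have h2' : (fun (_ : Unit) => (1 / φ) * (x ⬝ᵥ (W *ᵥ e))) ⬝ᵥ (fun (_ : Unit) => c / t)
        = (1 / φ) * (x ⬝ᵥ (W *ᵥ e)) * (c / t) := by
      simp [dotProduct]
    rw [h2', hre]
  rw [h1, h2, zero_add]
  have hφ' : φ ≠ 0 := ne_of_gt hφ
  field_simp
end

section
/- For every real C > 1, lim_{n→∞} Σ_{r=2}^{n} C^r · exp(−(1/2)·((log n − 1)·r − (r − 1)·log(log n) + log r)) = 0. -/
open Filter

private lemma log_sub_self_tendsto : Tendsto (fun x : ℝ => Real.log x - x) atTop atBot := by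
  have hg : Tendsto (fun x : ℝ => -x / 2) atTop atBot :=
    (tendsto_neg_atTop_atBot.comp tendsto_id).atBot_div_const two_pos
  refine tendsto_atBot_mono' atTop ?_ hg
  filter_upwards [eventually_gt_atTop (0:ℝ)] with x hx
  have h1 : Real.log x = 2 * Real.log (Real.sqrt x) := by
    rw [Real.log_sqrt hx.le]; ring
  have h2 : Real.log (Real.sqrt x) ≤ Real.sqrt x - 1 :=
    Real.log_le_sub_one_of_pos (Real.sqrt_pos.mpr hx)
  have h3 : Real.sqrt x ≤ x / 4 + 1 := by
    nlinarith [Real.sq_sqrt hx.le, Real.sqrt_nonneg x, sq_nonneg (Real.sqrt x - 2)]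
  nlinarith

/-- For every `C > 1`,
`Σ_{r=2}^{n} C^r · exp(−(1/2)·((log n − 1)·r − (r − 1)·log(log n) + log r)) → 0`
as `n → ∞`. -/
theorem stmt15 (C : ℝ) (hC : 1 < C) :
    Tendsto
      (fun n : ℕ => ∑ r ∈ Finset.Icc 2 n,
        C ^ r * Real.exp (-(1 / 2) *
          ((Real.log n - 1) * (r : ℝ) - ((r : ℝ) - 1) * Real.log (Real.log n) +
            Real.log r)))
      atTop (nhds 0) := by
  have hC0 : (0:ℝ) < C := lt_trans one_pos hC
  set a : ℕ → ℝ := fun n =>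
    Real.log C + 1/2 + Real.log (Real.log n) / 2 - Real.log n / 2 with ha
  set q : ℕ → ℝ := fun n => Real.exp (a n) with hq
  have hL : Tendsto (fun n : ℕ => Real.log n) atTop atTop :=
    Real.tendsto_log_atTop.comp tendsto_natCast_atTop_atTop
  have hA : Tendsto a atTop atBot := by
    have h1 : Tendsto (fun n : ℕ => Real.log (Real.log n) - Real.log n) atTop atBot :=
      log_sub_self_tendsto.comp hL
    have h2 : Tendsto (fun n : ℕ => (Real.log (Real.log n) - Real.log n) / 2) atTop atBot :=
      h1.atBot_div_const two_pos
    have h3 := tendsto_atBot_add_const_left atTop (Real.log C + 1/2) h2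
    exact h3.congr (fun n => by simp only [ha]; ring)
  have hq0 : Tendsto q atTop (nhds 0) := Real.tendsto_exp_atBot.comp hA
  have hsmall : ∀ᶠ n in atTop, q n < 1/2 := by
    have : Set.Iio (1/2 : ℝ) ∈ nhds (0:ℝ) := Iio_mem_nhds (by norm_num)
    exact hq0.eventually_mem this
  have hupper : Tendsto (fun n : ℕ => 2 * q n ^ 2) atTop (nhds 0) := by
    have h1 : Tendsto (fun n : ℕ => q n ^ 2) atTop (nhds 0) := by
      simpa using hq0.pow 2
    simpa using h1.const_mul 2
  refine tendsto_of_tendsto_of_tendsto_of_le_of_le' tendsto_const_nhds hupper ?_ ?_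
  · filter_upwards with n
    exact Finset.sum_nonneg fun r _ => by positivity
  · filter_upwards [hsmall, eventually_ge_atTop 3] with n hqn hn3
    have hn3' : (3:ℝ) ≤ (n:ℝ) := by exact_mod_cast hn3
    have hL1 : (1:ℝ) ≤ Real.log n := by
      have he : Real.exp 1 ≤ 3 := by
        have := Real.exp_one_lt_d9
        linarith
      have : Real.exp 1 ≤ (n:ℝ) := le_trans he hn3'
      exact (Real.le_log_iff_exp_le (by linarith)).mpr this
    have hlogL : 0 ≤ Real.log (Real.log n) := Real.log_nonneg hL1
    have hqpos : 0 < q n := Real.exp_pos _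
    have hterm : ∀ r ∈ Finset.Icc 2 n,
        C ^ r * Real.exp (-(1 / 2) *
          ((Real.log n - 1) * (r : ℝ) - ((r : ℝ) - 1) * Real.log (Real.log n) +
            Real.log r)) ≤ q n ^ r := by
      intro r hr
      obtain ⟨hr2, hrn⟩ := Finset.mem_Icc.mp hr
      have hr1 : (1:ℝ) ≤ (r:ℝ) := by exact_mod_cast le_trans (by norm_num) hr2
      have hlogr : 0 ≤ Real.log r := Real.log_nonneg hr1
      have hCr : C ^ r = Real.exp ((r:ℝ) * Real.log C) := by
        rw [Real.exp_nat_mul, Real.exp_log hC0]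
      have hqr : q n ^ r = Real.exp ((r:ℝ) * a n) := by
        rw [Real.exp_nat_mul]
      rw [hCr, hqr, ← Real.exp_add, Real.exp_le_exp, ha]
      nlinarith [hlogr, hlogL]
    calc (∑ r ∈ Finset.Icc 2 n, C ^ r * Real.exp (-(1 / 2) *
          ((Real.log n - 1) * (r : ℝ) - ((r : ℝ) - 1) * Real.log (Real.log n) +
            Real.log r)))
        ≤ ∑ r ∈ Finset.Icc 2 n, q n ^ r := Finset.sum_le_sum hterm
      _ ≤ 2 * q n ^ 2 := by
          rw [← Finset.Ico_add_one_right_eq_Icc, geom_sum_Ico (by linarith : q n ≠ 1) (by omega : 2 ≤ n + 1)]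
          rw [div_le_iff_of_neg (by linarith : q n - 1 < 0)]
          nlinarith [pow_nonneg hqpos.le (n+1),
            mul_nonneg (sq_nonneg (q n)) (by linarith : (0:ℝ) ≤ 1 - 2 * q n)]
end
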